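/- Let Q₁,...,Qₘ be symmetric positive semidefinite n×n real matrices, c₁,...,cₘ ∈ ℝⁿ, d₁,...,dₘ ∈ ℝ, and gᵢ(x) = dᵢ - cᵢᵀx - ½xᵀQᵢx. Suppose x̄ satisfies gᵢ(x̄) > 0 for all i and Σᵢ (cᵢ + Qᵢx̄)/gᵢ(x̄) = 0 (i.e., x̄ is a critical point of the barrier L(x) = -Σᵢ log gᵢ(x)). Then for every x with gᵢ(x) ≥ 0 for all i, it holds that Σᵢ [((cᵢ + Qᵢx̄)ᵀ(x - x̄))²/gᵢ(x̄)² + (x - x̄)ᵀQᵢ(x - x̄)/gᵢ(x̄)] ≤ m² + m. -/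

import Mathlib

open Matrix

private lemma dikin_core (m : ℕ) (t δ : Fin m → ℝ) (hδ : ∀ i, 0 ≤ δ i)
    (ht : ∀ i, t i ≤ 1 - δ i) (hsum : ∑ i, t i = 0) :
    ∑ i, (t i ^ 2 + 2 * δ i) ≤ (m : ℝ) ^ 2 + m := by
  have ht1 : ∀ i, t i ≤ 1 := fun i => (ht i).trans (by linarith [hδ i])
  have hlow : ∀ i, -((m : ℝ) - 1) ≤ t i := by
    intro i
    have h1 : ∑ j ∈ Finset.univ.erase i, t j ≤ (m : ℝ) - 1 := by
      have := Finset.sum_le_card_nsmul (Finset.univ.erase i) t 1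
        (fun j _ => ht1 j)
      have hcard : (Finset.univ.erase i).card = m - 1 := by
        simp [Finset.card_erase_of_mem]
      rw [hcard] at this
      have hm : 1 ≤ m := Nat.one_le_iff_ne_zero.mpr (by
        rintro rfl; exact i.elim0)
      have : ∑ j ∈ Finset.univ.erase i, t j ≤ ((m - 1 : ℕ) : ℝ) := by
        simpa using this
      calc ∑ j ∈ Finset.univ.erase i, t j ≤ ((m - 1 : ℕ) : ℝ) := this
        _ = (m : ℝ) - 1 := by
          rw [Nat.cast_sub hm]; simp
    have h2 : t i + ∑ j ∈ Finset.univ.erase i, t j = 0 := by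
      rw [Finset.add_sum_erase _ _ (Finset.mem_univ i)]; exact hsum
    linarith
  have key : ∀ i, t i ^ 2 + 2 * δ i ≤ -(m : ℝ) * t i + (m + 1) := by
    intro i
    nlinarith [mul_nonneg (by linarith [ht1 i] : (0:ℝ) ≤ 1 - t i)
      (by linarith [hlow i] : (0:ℝ) ≤ t i + ((m : ℝ) - 1)), ht i, hδ i]
  calc ∑ i, (t i ^ 2 + 2 * δ i) ≤ ∑ i : Fin m, (-(m : ℝ) * t i + (m + 1)) :=
        Finset.sum_le_sum fun i _ => key i
    _ = -(m : ℝ) * (∑ i, t i) + m * (m + 1) := by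
        rw [Finset.sum_add_distrib, ← Finset.mul_sum]
        simp [Finset.sum_const, Finset.card_univ, mul_add]
    _ = (m : ℝ) ^ 2 + m := by rw [hsum]; ring

private lemma symm_dot {n : ℕ} (M : Matrix (Fin n) (Fin n) ℝ) (hM : Mᵀ = M)
    (a b : Fin n → ℝ) : a ⬝ᵥ M.mulVec b = b ⬝ᵥ M.mulVec a := by
  simp only [dotProduct, mulVec, dotProduct, Finset.mul_sum]
  rw [Finset.sum_comm]
  refine Finset.sum_congr rfl fun j _ => Finset.sum_congr rfl fun i _ => ?_
  have h := congrFun (congrFun hM i) j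
  simp only [Matrix.transpose_apply] at h
  rw [h]; ring

theorem outer_dikin_ellipsoid (n m : ℕ)
    (Q : Fin m → Matrix (Fin n) (Fin n) ℝ) (hQ : ∀ i, (Q i).PosSemidef)
    (c : Fin m → Fin n → ℝ) (d : Fin m → ℝ)
    (g : Fin m → (Fin n → ℝ) → ℝ)
    (hg : ∀ i x, g i x = d i - c i ⬝ᵥ x - (1/2) * x ⬝ᵥ (Q i).mulVec x)
    (xbar : Fin n → ℝ) (hpos : ∀ i, 0 < g i xbar)
    (hcrit : ∑ i, (g i xbar)⁻¹ • (c i + (Q i).mulVec xbar) = 0)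
    (x : Fin n → ℝ) (hx : ∀ i, 0 ≤ g i x) :
    ∑ i, (((c i + (Q i).mulVec xbar) ⬝ᵥ (x - xbar)) ^ 2 / (g i xbar) ^ 2
        + (x - xbar) ⬝ᵥ (Q i).mulVec (x - xbar) / g i xbar)
      ≤ (m : ℝ) ^ 2 + m := by
  set y : Fin n → ℝ := x - xbar with hy
  have hsymQ : ∀ i, (Q i)ᵀ = Q i := fun i => by
    have := (hQ i).1
    simpa [Matrix.IsHermitian, Matrix.conjTranspose_eq_transpose_of_trivial] using this
  have hQnn : ∀ i, 0 ≤ y ⬝ᵥ (Q i).mulVec y := fun i => by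
    have := (hQ i).dotProduct_mulVec_nonneg y
    simpa using this
  -- Taylor identity
  have taylor : ∀ i, (c i + (Q i).mulVec xbar) ⬝ᵥ y
      = g i xbar - g i x - (1/2) * (y ⬝ᵥ (Q i).mulVec y) := by
    intro i
    have hsw : xbar ⬝ᵥ (Q i).mulVec x = x ⬝ᵥ (Q i).mulVec xbar :=
      symm_dot _ (hsymQ i) _ _
    have hcm : ((Q i).mulVec xbar) ⬝ᵥ y = y ⬝ᵥ (Q i).mulVec xbar :=
      dotProduct_comm _ _
    rw [hg, hg, add_dotProduct, hcm, hy]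
    simp only [dotProduct_sub, sub_dotProduct, Matrix.mulVec_sub]
    rw [show xbar ⬝ᵥ ((Q i).mulVec x) = x ⬝ᵥ (Q i).mulVec xbar from hsw]
    ring
  -- sum of t is zero
  have hsd : (∑ i, (g i xbar)⁻¹ • (c i + (Q i).mulVec xbar)) ⬝ᵥ y
      = ∑ i, ((g i xbar)⁻¹ • (c i + (Q i).mulVec xbar)) ⬝ᵥ y := by
    simp only [dotProduct, Finset.sum_apply, Finset.sum_mul]
    exact Finset.sum_comm
  have hsumt : ∑ i, (c i + (Q i).mulVec xbar) ⬝ᵥ y / g i xbar = 0 := by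
    have h : (∑ i, (g i xbar)⁻¹ • (c i + (Q i).mulVec xbar)) ⬝ᵥ y = 0 := by
      rw [hcrit]; simp
    rw [hsd] at h
    rw [← h]
    refine Finset.sum_congr rfl fun i _ => ?_
    rw [smul_dotProduct, smul_eq_mul, div_eq_inv_mul]
  set t : Fin m → ℝ := fun i => (c i + (Q i).mulVec xbar) ⬝ᵥ y / g i xbar with htdef
  set δ : Fin m → ℝ := fun i => (1/2) * (y ⬝ᵥ (Q i).mulVec y) / g i xbar with hδdef
  have hδnn : ∀ i, 0 ≤ δ i := fun i =>
    div_nonneg (by linarith [hQnn i]) (hpos i).le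
  have htle : ∀ i, t i ≤ 1 - δ i := by
    intro i
    have hs := hpos i
    rw [htdef, hδdef]
    simp only
    rw [div_le_iff₀ hs, sub_mul, div_mul_cancel₀ _ hs.ne', one_mul]
    have := hx i
    rw [taylor i]
    linarith
  have main := dikin_core m t δ hδnn htle hsumt
  refine le_trans (le_of_eq ?_) main
  refine Finset.sum_congr rfl fun i _ => ?_
  have hs := (hpos i).ne'
  rw [htdef, hδdef]
  simp only
  field_simp
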